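/- arXiv:2205.07958 — 3 statements merged into one kernel-verified Lean document; each statement's English description precedes it below -/
import Mathlib

section
/- The complex number a·b has modulus 1, i.e. |a·b| = 1. -/
open Polynomial

lemma prod_roots_eq_one (r s t u : ℂ)
    (hr : r^4 + r + 1 = 0) (hs : s^4 + s + 1 = 0)
    (ht : t^4 + t + 1 = 0) (hu : u^4 + u + 1 = 0)
    (hrs : r ≠ s) (hrt : r ≠ t) (hru : r ≠ u)
    (hst : s ≠ t) (hsu : s ≠ u) (htu : t ≠ u) :
    r * s * t * u = 1 := by
  have qrs : r^3 + r^2*s + r*s^2 + s^3 + 1 = 0 := by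
    have h : (r - s) * (r^3 + r^2*s + r*s^2 + s^3 + 1) = 0 := by linear_combination hr - hs
    exact (mul_eq_zero.mp h).resolve_left (sub_ne_zero.mpr hrs)
  have qrt : r^3 + r^2*t + r*t^2 + t^3 + 1 = 0 := by
    have h : (r - t) * (r^3 + r^2*t + r*t^2 + t^3 + 1) = 0 := by linear_combination hr - ht
    exact (mul_eq_zero.mp h).resolve_left (sub_ne_zero.mpr hrt)
  have qru : r^3 + r^2*u + r*u^2 + u^3 + 1 = 0 := by
    have h : (r - u) * (r^3 + r^2*u + r*u^2 + u^3 + 1) = 0 := by linear_combination hr - hu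
    exact (mul_eq_zero.mp h).resolve_left (sub_ne_zero.mpr hru)
  have Qrst : r^2 + r*s + r*t + s^2 + s*t + t^2 = 0 := by
    have h : (s - t) * (r^2 + r*s + r*t + s^2 + s*t + t^2) = 0 := by linear_combination qrs - qrt
    exact (mul_eq_zero.mp h).resolve_left (sub_ne_zero.mpr hst)
  have Qrsu : r^2 + r*s + r*u + s^2 + s*u + u^2 = 0 := by
    have h : (s - u) * (r^2 + r*s + r*u + s^2 + s*u + u^2) = 0 := by linear_combination qrs - qru
    exact (mul_eq_zero.mp h).resolve_left (sub_ne_zero.mpr hsu)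
  have e1 : r + s + t + u = 0 := by
    have h : (t - u) * (r + s + t + u) = 0 := by linear_combination Qrst - Qrsu
    exact (mul_eq_zero.mp h).resolve_left (sub_ne_zero.mpr htu)
  have e2 : r*s + r*t + r*u + s*t + s*u + t*u = 0 := by
    linear_combination (r + s + t) * e1 - Qrst
  have e3r : (r*s*t + r*s*u + r*t*u + s*t*u + 1) * r + (1 - r*s*t*u) = 0 := by
    linear_combination hr - r^3 * e1 + r^2 * e2
  have e3s : (r*s*t + r*s*u + r*t*u + s*t*u + 1) * s + (1 - r*s*t*u) = 0 := by
    linear_combination hs - s^3 * e1 + s^2 * e2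
  have e3 : r*s*t + r*s*u + r*t*u + s*t*u + 1 = 0 := by
    have h : (r - s) * (r*s*t + r*s*u + r*t*u + s*t*u + 1) = 0 := by
      linear_combination e3r - e3s
    exact (mul_eq_zero.mp h).resolve_left (sub_ne_zero.mpr hrs)
  linear_combination -e3r + r * e3

lemma not_real_root (a : ℂ) (ha : a^4 + a + 1 = 0) : a ≠ (starRingEnd ℂ) a := by
  intro h
  have him : a.im = 0 := by
    have := congrArg Complex.im h
    simp [Complex.conj_im] at this
    linarith
  set x := a.re
  have hx : a = (x : ℂ) := by
    exact Complex.ext rfl him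
  rw [hx] at ha
  have hre : x^4 + x + 1 = 0 := by exact_mod_cast ha
  nlinarith [sq_nonneg (x^2 - 1/2), sq_nonneg (x + 1/2)]

/-- If `a` and `b` are complex roots of `X^4 + X + 1` with `b ≠ a` and
`b ≠ conj a` (so the four roots are `a, conj a, b, conj b`), then `|a·b| = 1`. -/
theorem stmt_4 (a b : ℂ)
    (ha : (X ^ 4 + X + 1 : ℂ[X]).IsRoot a)
    (hb : (X ^ 4 + X + 1 : ℂ[X]).IsRoot b)
    (hba : b ≠ a) (hbconj : b ≠ (starRingEnd ℂ) a) :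
    ‖a * b‖ = 1 := by
  have ea : a^4 + a + 1 = 0 := by simpa [Polynomial.IsRoot] using ha
  have eb : b^4 + b + 1 = 0 := by simpa [Polynomial.IsRoot] using hb
  have eca : (starRingEnd ℂ a)^4 + starRingEnd ℂ a + 1 = 0 := by
    have := congrArg (starRingEnd ℂ) ea
    simpa [map_add, map_pow] using this
  have ecb : (starRingEnd ℂ b)^4 + starRingEnd ℂ b + 1 = 0 := by
    have := congrArg (starRingEnd ℂ) eb
    simpa [map_add, map_pow] using this
  have h1 : a ≠ starRingEnd ℂ a := not_real_root a ea
  have h2 : b ≠ starRingEnd ℂ b := not_real_root b eb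
  have h3 : a ≠ starRingEnd ℂ b := by
    intro h
    apply hbconj
    have := congrArg (starRingEnd ℂ) h
    simp at this
    exact this.symm
  have h4 : starRingEnd ℂ a ≠ starRingEnd ℂ b := by
    intro h
    exact hba ((starRingEnd ℂ).injective h).symm
  have key : a * starRingEnd ℂ a * b * starRingEnd ℂ b = 1 :=
    prod_roots_eq_one a (starRingEnd ℂ a) b (starRingEnd ℂ b) ea eca eb ecb
      h1 (fun h => hba h.symm) h3 (fun h => hbconj h.symm) h4 h2
  have habs2 : (‖a * b‖)^2 = 1 := by
    have h : (a * b) * starRingEnd ℂ (a * b) = 1 := by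
      rw [map_mul]; linear_combination key
    rw [Complex.mul_conj] at h
    have hn : Complex.normSq (a * b) = 1 := by exact_mod_cast h
    rw [Complex.sq_norm]; exact hn
  nlinarith [norm_nonneg (a * b)]
end

section
/- The complex number λ = a·b is not a root of unity: for every positive integer n, (a·b)^n ≠ 1. -/
open Polynomial IntermediateField

private lemma no_real_root (x : ℝ) : x^4 + x + 1 ≠ 0 := by
  nlinarith [sq_nonneg (x^2 - 1/2), sq_nonneg (x + 1/2)]

private lemma key (a b : ℂ) (ha : a^4 + a + 1 = 0) (hb : b^4 + b + 1 = 0)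
    (hba : b ≠ a) (hbconj : b ≠ (starRingEnd ℂ) a) :
    ((a*b + (starRingEnd ℂ) a * (starRingEnd ℂ) b)^3
      - 4*(a*b + (starRingEnd ℂ) a * (starRingEnd ℂ) b) - 1 = 0) ∧
    (a*b) * ((starRingEnd ℂ) a * (starRingEnd ℂ) b) = 1 := by
  set A := (starRingEnd ℂ) a with hAdef
  set B := (starRingEnd ℂ) b with hBdef
  have hA : A^4 + A + 1 = 0 := by
    have := congrArg (starRingEnd ℂ) ha
    simpa [map_add, map_pow] using this
  have hB : B^4 + B + 1 = 0 := by
    have := congrArg (starRingEnd ℂ) hb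
    simpa [map_add, map_pow] using this
  -- distinctness
  have hnotreal : ∀ x : ℂ, x^4 + x + 1 = 0 → x ≠ (starRingEnd ℂ) x := by
    intro x hx h
    have h' : (x.re : ℂ) = x := Complex.conj_eq_iff_re.mp h.symm
    rw [← h'] at hx
    have : ((x.re^4 + x.re + 1 : ℝ) : ℂ) = 0 := by push_cast; linear_combination hx
    exact no_real_root x.re (by exact_mod_cast this)
  have haA : a ≠ A := hnotreal a ha
  have hbB : b ≠ B := hnotreal b hb
  have haB : a ≠ B := by
    intro h
    exact hbconj (by rw [hAdef, h, hBdef, Complex.conj_conj])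
  have hAb : A ≠ b := fun h => hbconj h.symm
  have hAB : A ≠ B := fun h => hba ((starRingEnd ℂ).injective h.symm)
  -- divided differences
  have E : ∀ x y : ℂ, x^4 + x + 1 = 0 → y^4 + y + 1 = 0 → x ≠ y →
      x^3 + x^2*y + x*y^2 + y^3 + 1 = 0 := by
    intro x y hx hy hxy
    have h : (x - y) * (x^3 + x^2*y + x*y^2 + y^3 + 1) = 0 := by linear_combination hx - hy
    exact (mul_eq_zero.mp h).resolve_left (sub_ne_zero.mpr hxy)
  have Eab := E a b ha hb (Ne.symm hba)
  have EAb := E A b hA hb hAb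
  have EaB := E a B ha hB haB
  have EAB := E A B hA hB hAB
  have F1 : a^2 + a*A + A^2 + (a+A)*b + b^2 = 0 := by
    have h : (a - A) * (a^2 + a*A + A^2 + (a+A)*b + b^2) = 0 := by
      linear_combination Eab - EAb
    exact (mul_eq_zero.mp h).resolve_left (sub_ne_zero.mpr haA)
  have F2 : a^2 + a*A + A^2 + (a+A)*B + B^2 = 0 := by
    have h : (a - A) * (a^2 + a*A + A^2 + (a+A)*B + B^2) = 0 := by
      linear_combination EaB - EAB
    exact (mul_eq_zero.mp h).resolve_left (sub_ne_zero.mpr haA)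
  have he1 : a + A + b + B = 0 := by
    have h : (b - B) * (a + A + b + B) = 0 := by linear_combination F1 - F2
    exact (mul_eq_zero.mp h).resolve_left (sub_ne_zero.mpr hbB)
  have he2 : a*A + a*b + a*B + A*b + A*B + b*B = 0 := by
    linear_combination (a+A+b) * he1 - F1
  have ha4 : (a*A*b + a*A*B + a*b*B + A*b*B + 1)*a - (a*A*b*B - 1) = 0 := by
    linear_combination ha - a^3*he1 + a^2*he2
  have hb4 : (a*A*b + a*A*B + a*b*B + A*b*B + 1)*b - (a*A*b*B - 1) = 0 := by
    linear_combination hb - b^3*he1 + b^2*he2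
  have he3 : a*A*b + a*A*B + a*b*B + A*b*B = -1 := by
    have h : (a*A*b + a*A*B + a*b*B + A*b*B + 1) * (a - b) = 0 := by
      linear_combination ha4 - hb4
    have := (mul_eq_zero.mp h).resolve_right (sub_ne_zero.mpr (Ne.symm hba))
    linear_combination this
  have he4 : a*A*b*B = 1 := by linear_combination a*he3 - ha4
  constructor
  · linear_combination (-(a*A*b + a*A*B + a*b*B + A*b*B)*(a*b + A*B)
      + (a+A+b+B)*(a*A*b*B)) * he1
      + ((a*b + A*B)^2 - 4*(a*A*b*B)) * he2
      + ((a*A*b + a*A*B + a*b*B + A*b*B) - 1) * he3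
      + (4*(a*b + A*B)) * he4
  · linear_combination he4


-- the cubic over ℚ
noncomputable def cub : ℚ[X] := X^3 - C 4 * X - C 1

lemma cub_natDegree : cub.natDegree = 3 := by unfold cub; compute_degree!

lemma cub_monic : cub.Monic := by
  unfold cub; monicity!

lemma cub_irred : Irreducible cub := by
  rw [irreducible_iff_roots_eq_zero_of_degree_le_three (by rw [cub_natDegree]; norm_num)
    (by rw [cub_natDegree])]
  rw [Multiset.eq_zero_iff_forall_notMem]
  intro q hq
  rw [mem_roots (cub_monic.ne_zero)] at hq
  have hq' : Polynomial.aeval q (X^3 - C 4 * X - C 1 : ℤ[X]) = 0 := by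
    have := hq
    simp [cub, IsRoot, map_ofNat] at this ⊢
    linear_combination this
  have hmonic : (X^3 - C 4 * X - C 1 : ℤ[X]).Monic := by monicity!
  obtain ⟨z, hz⟩ := isInteger_of_is_root_of_monic hmonic hq'
  rw [← hz] at hq
  have hzq : (z:ℚ)^3 - 4*(z:ℚ) - 1 = 0 := by
    have := hq
    simp [cub, IsRoot] at this
    linear_combination this
  have hz3 : z^3 - 4*z - 1 = 0 := by exact_mod_cast hzq
  have hdvd : z ∣ 1 := ⟨z^2 - 4, by linarith⟩
  rcases Int.isUnit_iff.mp (isUnit_of_dvd_one hdvd) with h | h <;> subst h <;> norm_num at hz3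




-- main contradiction lemma: if λ on "unit-circle-orbit" with s := λ + λ⁻¹ root of cub, contradiction
lemma main_contra (lam : ℂ) (n : ℕ) (hn : 0 < n) (h1 : lam ^ n = 1)
    (hs : (lam + lam⁻¹)^3 - 4*(lam + lam⁻¹) - 1 = 0) : False := by
  have hlam0 : lam ≠ 0 := by
    intro h; rw [h, zero_pow hn.ne'] at h1; exact zero_ne_one h1
  -- real root of the cubic greater than 2
  obtain ⟨u, humem, hu⟩ : ∃ u : ℝ, u ∈ Set.Ioo (2:ℝ) 3 ∧ u^3 - 4*u - 1 = 0 := by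
    have hcont : ContinuousOn (fun x : ℝ => x^3 - 4*x - 1) (Set.Icc 2 3) := by fun_prop
    have h0 : (0:ℝ) ∈ Set.Ioo ((2:ℝ)^3 - 4*2 - 1) ((3:ℝ)^3 - 4*3 - 1) := by norm_num
    obtain ⟨u, hmem, hval⟩ := intermediate_value_Ioo (by norm_num : (2:ℝ) ≤ 3) hcont h0
    exact ⟨u, hmem, hval⟩
  have hu2 : (2:ℝ) < u := humem.1
  haveI : Fact (Irreducible cub) := ⟨cub_irred⟩
  set Kf := AdjoinRoot cub
  -- algebra map to ℂ sending root to u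
  have huC : Polynomial.aeval ((u:ℂ)) cub = 0 := by
    simp [cub, map_ofNat]
    have : ((u^3 - 4*u - 1 : ℝ) : ℂ) = 0 := by exact_mod_cast congrArg Complex.ofReal hu
    push_cast at this
    linear_combination this
  let φ : Kf →ₐ[ℚ] ℂ := AdjoinRoot.liftAlgHom cub (Algebra.ofId ℚ ℂ) ((u:ℂ)) huC
  -- the field L = ℚ(λ)
  have hint : IsIntegral ℚ lam := by
    refine ⟨X^n - C 1, monic_X_pow_sub_C 1 hn.ne', ?_⟩
    simp [h1]
  set L : IntermediateField ℚ ℂ := ℚ⟮lam⟯ with hLdef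
  haveI : FiniteDimensional ℚ L := IntermediateField.adjoin.finiteDimensional hint
  haveI : Algebra.IsAlgebraic ℚ L := Algebra.IsAlgebraic.of_finite ℚ L
  set lamL : L := IntermediateField.AdjoinSimple.gen ℚ lam with hlamdef
  have hcoe : (lamL : ℂ) = lam := rfl
  set sL : L := lamL + lamL⁻¹ with hsLdef
  have hscoe : (sL : ℂ) = lam + lam⁻¹ := by
    push_cast [hsLdef]
    rfl
  have hsL : Polynomial.aeval sL cub = 0 := by
    have hinj : Function.Injective (algebraMap L ℂ) := (algebraMap L ℂ).injective
    apply hinj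
    rw [map_zero, ← Polynomial.aeval_algebraMap_apply]
    have : algebraMap L ℂ sL = lam + lam⁻¹ := hscoe
    rw [this]
    simp [cub, map_ofNat]
    linear_combination hs
  letI : Algebra Kf L := (AdjoinRoot.liftAlgHom cub (Algebra.ofId ℚ L) sL hsL).toRingHom.toAlgebra
  letI : Algebra Kf ℂ := φ.toRingHom.toAlgebra
  haveI : IsScalarTower ℚ Kf L := IsScalarTower.of_algebraMap_eq
    (fun x => ((AdjoinRoot.liftAlgHom cub (Algebra.ofId ℚ L) sL hsL).commutes x).symm)
  haveI : Algebra.IsAlgebraic Kf L := Algebra.IsAlgebraic.tower_top (K := ℚ) Kf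
  haveI : NoZeroSMulDivisors Kf L :=
    inferInstance
  haveI : NoZeroSMulDivisors Kf ℂ :=
    inferInstance
  let τ : L →ₐ[Kf] ℂ := IsAlgClosed.lift
  set μ : ℂ := τ lamL with hmudef
  -- μ^n = 1
  have hpowL : lamL ^ n = 1 := by
    apply (algebraMap L ℂ).injective
    rw [map_pow, map_one]
    exact h1
  have hμn : μ ^ n = 1 := by
    rw [hmudef, ← map_pow, hpowL, map_one]
  have hμ0 : μ ≠ 0 := by
    intro h; rw [h, zero_pow hn.ne'] at hμn; exact zero_ne_one hμn
  -- the relation lamL^2 - sL*lamL + 1 = 0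
  have hrelL : lamL^2 - sL * lamL + 1 = 0 := by
    apply (algebraMap L ℂ).injective
    simp only [map_add, map_sub, map_mul, map_pow, map_one, map_zero]
    have h2 : algebraMap L ℂ sL = lam + lam⁻¹ := hscoe
    have h3 : algebraMap L ℂ lamL = lam := rfl
    rw [h2, h3]
    field_simp
    ring
  -- τ sL = u
  have hτs : τ sL = (u:ℂ) := by
    have h1' : sL = algebraMap Kf L (AdjoinRoot.root cub) := by
      rw [RingHom.algebraMap_toAlgebra]
      exact (AdjoinRoot.liftAlgHom_root cub _ _ hsL).symm
    rw [h1', τ.commutes, RingHom.algebraMap_toAlgebra]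
    exact AdjoinRoot.liftAlgHom_root cub _ _ huC
  have hμrel : μ^2 - (u:ℂ) * μ + 1 = 0 := by
    have := congrArg τ hrelL
    rw [map_add, map_sub, map_pow, map_mul, map_one, map_zero, hτs] at this
    exact this
  -- |μ| = 1
  have habs : ‖μ‖ = 1 := by
    have : ‖μ‖ ^ n = 1 := by
      rw [← norm_pow, hμn, norm_one]
    exact (pow_eq_one_iff_of_nonneg (norm_nonneg μ) hn.ne').mp this
  have huμ : (u:ℂ) = μ + μ⁻¹ := by
    field_simp
    linear_combination -hμrel
  have : u ≤ 2 := by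
    have h2 : ‖(u:ℂ)‖ = u := by
      rw [Complex.norm_real, Real.norm_eq_abs, abs_of_pos (by linarith)]
    calc u = ‖(u:ℂ)‖ := h2.symm
      _ = ‖μ + μ⁻¹‖ := by rw [huμ]
      _ ≤ ‖μ‖ + ‖μ⁻¹‖ := norm_add_le _ _
      _ = 2 := by rw [norm_inv, habs]; norm_num
  linarith

/-- If `a` and `b` are complex roots of `X^4 + X + 1` with `b ≠ a` and
`b ≠ conj a` (so the four roots are `a, conj a, b, conj b`), then `λ = a·b`
is not a root of unity: `(a·b)^n ≠ 1` for every positive integer `n`. -/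
theorem stmt_6 (a b : ℂ)
    (ha : (X ^ 4 + X + 1 : ℂ[X]).IsRoot a)
    (hb : (X ^ 4 + X + 1 : ℂ[X]).IsRoot b)
    (hba : b ≠ a) (hbconj : b ≠ (starRingEnd ℂ) a) :
    ∀ n : ℕ, 0 < n → (a * b) ^ n ≠ 1 := by
  intro n hn h1
  have ha' : a^4 + a + 1 = 0 := by simpa [Polynomial.IsRoot] using ha
  have hb' : b^4 + b + 1 = 0 := by simpa [Polynomial.IsRoot] using hb
  obtain ⟨hs, hprod⟩ := key a b ha' hb' hba hbconj
  have hinv : (a*b)⁻¹ = (starRingEnd ℂ) a * (starRingEnd ℂ) b :=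
    inv_eq_of_mul_eq_one_right hprod
  exact main_contra (a*b) n hn h1 (by rw [hinv]; exact hs)
end

section
/- If Q is a polynomial with real coefficients of degree at most 3 such that Q(a) = 0 and Q(b) = 0, then Q is the zero polynomial. -/
open Polynomial

/-- A root of `X^4 + X + 1` is not real. -/
lemma aux_not_real (a : ℂ) (ha : (X ^ 4 + X + 1 : ℂ[X]).IsRoot a) :
    (starRingEnd ℂ) a ≠ a := by
  intro h
  rw [Complex.conj_eq_iff_re] at h
  have ha' : a ^ 4 + a + 1 = 0 := by simpa [Polynomial.IsRoot] using ha
  rw [← h] at ha'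
  have : ((a.re : ℝ) ^ 4 + a.re + 1 : ℝ) = 0 := by
    exact_mod_cast ha'
  nlinarith [sq_nonneg (a.re ^ 2 - 1/2), sq_nonneg (a.re + 1/2)]

/-- If `a` and `b` are complex roots of `X^4 + X + 1` with `b ≠ a` and
`b ≠ conj a` (so the four roots are `a, conj a, b, conj b`), and `Q` is a real
polynomial of degree at most `3` with `Q(a) = 0` and `Q(b) = 0`, then `Q = 0`. -/
theorem stmt_8 (a b : ℂ)
    (ha : (X ^ 4 + X + 1 : ℂ[X]).IsRoot a)
    (hb : (X ^ 4 + X + 1 : ℂ[X]).IsRoot b)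
    (hba : b ≠ a) (hbconj : b ≠ (starRingEnd ℂ) a)
    (Q : ℝ[X]) (hdeg : Q.degree ≤ 3)
    (hQa : aeval a Q = 0) (hQb : aeval b Q = 0) :
    Q = 0 := by
  by_contra hQ
  set Qc : ℂ[X] := Q.map (algebraMap ℝ ℂ) with hQc
  have hQcne : Qc ≠ 0 := by
    simpa [hQc, Polynomial.map_eq_zero_iff (algebraMap ℝ ℂ).injective] using hQ
  have hQca : aeval ((starRingEnd ℂ) a) Q = 0 := by
    rw [Polynomial.aeval_conj, hQa, map_zero]
  have hQcb : aeval ((starRingEnd ℂ) b) Q = 0 := by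
    rw [Polynomial.aeval_conj, hQb, map_zero]
  -- distinctness
  have hane : a ≠ (starRingEnd ℂ) a := (aux_not_real a ha).symm
  have hbne : b ≠ (starRingEnd ℂ) b := (aux_not_real b hb).symm
  have hacb : a ≠ (starRingEnd ℂ) b := by
    intro h
    exact hbconj (by rw [h, Complex.conj_conj])
  have hcacb : (starRingEnd ℂ) a ≠ (starRingEnd ℂ) b :=
    fun h => hba ((starRingEnd ℂ).injective h).symm
  -- the finset of four roots
  have hmem : ∀ z ∈ ({a, (starRingEnd ℂ) a, b, (starRingEnd ℂ) b} : Finset ℂ),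
      z ∈ Qc.roots.toFinset := by
    intro z hz
    rw [Multiset.mem_toFinset, Polynomial.mem_roots hQcne]
    simp only [Finset.mem_insert, Finset.mem_singleton] at hz
    have heval : ∀ w : ℂ, aeval w Q = 0 → Qc.IsRoot w := by
      intro w hw
      simpa [hQc, Polynomial.IsRoot, Polynomial.eval_map, Polynomial.aeval_def] using hw
    rcases hz with rfl | rfl | rfl | rfl
    exacts [heval _ hQa, heval _ hQca, heval _ hQb, heval _ hQcb]
  have hcard : ({a, (starRingEnd ℂ) a, b, (starRingEnd ℂ) b} : Finset ℂ).card = 4 := by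
    rw [Finset.card_insert_of_notMem (by simp [hane, hba.symm, hacb]),
        Finset.card_insert_of_notMem (by simp [Ne.symm hbconj, hcacb]),
        Finset.card_insert_of_notMem (by simp [hbne]),
        Finset.card_singleton]
  have h4 : 4 ≤ Qc.roots.toFinset.card := by
    rw [← hcard]
    exact Finset.card_le_card hmem
  have h5 : Qc.roots.toFinset.card ≤ Qc.natDegree :=
    le_trans (Multiset.toFinset_card_le _) (Polynomial.card_roots' Qc)
  have h6 : Qc.natDegree ≤ 3 := by
    rw [hQc, Polynomial.natDegree_map_eq_of_injective (algebraMap ℝ ℂ).injective]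
    exact Polynomial.natDegree_le_iff_degree_le.mpr hdeg
  omega
end
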